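/- Let κ > 0 and 0 < α < π/(2√κ). The function g(σ) = |log σ| + log sin_κ(σα), defined for σ ∈ (0, π/(2√κ·α)], attains a strict global minimum at σ = 1: g(σ) > g(1) = log sin_κ(α) for every σ ≠ 1 in this interval. -/

import Mathlib

open Real MeasureTheory Filter Asymptotics

/-- Inverse hyperbolic tangent. -/
noncomputable def artanh (y : ℝ) : ℝ := Real.log ((1 + y) / (1 - y)) / 2

/-- The generalized sine function `sin_κ`. -/
noncomputable def sinK (κ t : ℝ) : ℝ :=
  if 0 < κ then Real.sin (Real.sqrt κ * t) / Real.sqrt κ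
  else if κ < 0 then Real.sinh (Real.sqrt (-κ) * t) / Real.sqrt (-κ)
  else t

/-- The generalized cosine function `cos_κ = sin_κ'`. -/
noncomputable def cosK (κ t : ℝ) : ℝ :=
  if 0 < κ then Real.cos (Real.sqrt κ * t)
  else if κ < 0 then Real.cosh (Real.sqrt (-κ) * t)
  else 1

/-- The generalized tangent function `tan_κ`. -/
noncomputable def tanK (κ t : ℝ) : ℝ := sinK κ t / cosK κ t

/-- The inverse function `arctan_κ` of `tan_κ`. -/
noncomputable def arctanK (κ x : ℝ) : ℝ :=
  if 0 < κ then Real.arctan (Real.sqrt κ * x) / Real.sqrt κ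
  else if κ < 0 then _root_.artanh (Real.sqrt (-κ) * x) / Real.sqrt (-κ)
  else x

/-- `ω_{n-1}`, the (n-1)-volume of the unit sphere of ℝⁿ, i.e. `n` times the
volume of the unit ball. -/
noncomputable def omegaS (n : ℕ) : ℝ :=
  n * (volume (Metric.ball (0 : EuclideanSpace ℝ (Fin n)) 1)).toReal

/-- `A_κ(t)`: the volume of a geodesic sphere of radius `t` in the model space. -/
noncomputable def AK (n : ℕ) (κ t : ℝ) : ℝ := omegaS n * sinK κ t ^ (n - 1)

/-- `V_κ(t)`: the volume of a geodesic ball of radius `t` in the model space. -/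
noncomputable def VK (n : ℕ) (κ t : ℝ) : ℝ := omegaS n * ∫ s in (0:ℝ)..t, sinK κ s ^ (n - 1)

/-- The natural domain of `V_κ`: `[0, π/√κ)` when `κ > 0` and `[0, ∞)` otherwise. -/
noncomputable def domK (κ : ℝ) : Set ℝ :=
  if 0 < κ then Set.Ico 0 (Real.pi / Real.sqrt κ) else Set.Ici 0

/-- The range of `V_κ` (on its natural domain). -/
noncomputable def rangeVK (n : ℕ) (κ : ℝ) : Set ℝ := VK n κ '' domK κ

/-- The inverse of `V_κ` on its natural domain. -/
noncomputable def VKinv (n : ℕ) (κ v : ℝ) : ℝ := sInf {t : ℝ | t ∈ domK κ ∧ VK n κ t = v}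

/-- The isoperimetric profile `I_κ = A_κ ∘ V_κ⁻¹` of the model space. -/
noncomputable def IK (n : ℕ) (κ v : ℝ) : ℝ := AK n κ (VKinv n κ v)
/-- For `κ > 0` and `0 < α < π/(2√κ)`, the function
`g(σ) = |log σ| + log sin_κ(σα)` on `(0, π/(2√κ·α)]` attains a strict global
minimum at `σ = 1`, with `g(1) = log sin_κ(α)`. -/
theorem strict_min_of_general_bound_positive_curvature (κ α : ℝ) (hκ : 0 < κ)
    (hα : 0 < α) (hα' : α < Real.pi / (2 * Real.sqrt κ)) :
    (|Real.log 1| + Real.log (sinK κ (1 * α)) = Real.log (sinK κ α)) ∧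
    ∀ σ ∈ Set.Ioc (0 : ℝ) (Real.pi / (2 * Real.sqrt κ * α)), σ ≠ 1 →
      Real.log (sinK κ α) < |Real.log σ| + Real.log (sinK κ (σ * α)) := by
  have hs : 0 < Real.sqrt κ := Real.sqrt_pos.2 hκ
  have hsα : Real.sqrt κ * α < Real.pi / 2 := by
    have h2 := (lt_div_iff₀ (by positivity : (0:ℝ) < 2 * Real.sqrt κ)).1 hα'
    nlinarith
  have hsin_pos : ∀ x : ℝ, 0 < x → x ≤ Real.pi / 2 → 0 < Real.sin x := by
    intro x hx hx'
    exact Real.sin_pos_of_pos_of_lt_pi hx (lt_of_le_of_lt hx' (by linarith [Real.pi_pos]))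
  have hsinKα : sinK κ α = Real.sin (Real.sqrt κ * α) / Real.sqrt κ := by
    simp [sinK, hκ]
  have hApos : 0 < Real.sin (Real.sqrt κ * α) :=
    hsin_pos _ (by positivity) hsα.le
  constructor
  · simp [hsinKα]
  · intro σ hσ hσ1
    obtain ⟨hσ0, hσub⟩ := hσ
    have hsinKσ : sinK κ (σ * α) = Real.sin (Real.sqrt κ * (σ * α)) / Real.sqrt κ := by
      simp [sinK, hκ]
    have hσα : Real.sqrt κ * (σ * α) ≤ Real.pi / 2 := by
      have h2 := (le_div_iff₀ (by positivity : (0:ℝ) < 2 * Real.sqrt κ * α)).1 hσub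
      nlinarith
    have hBpos : 0 < Real.sin (Real.sqrt κ * (σ * α)) :=
      hsin_pos _ (by positivity) hσα
    rw [hsinKα, hsinKσ]
    rcases lt_or_gt_of_ne hσ1 with hlt | hgt
    · -- σ < 1
      have habs : |Real.log σ| = Real.log σ⁻¹ := by
        rw [Real.log_inv, abs_of_neg (Real.log_neg hσ0 hlt)]
      rw [habs, ← Real.log_mul (by positivity) (by positivity)]
      apply Real.log_lt_log (by positivity)
      have hconc := strictConcaveOn_sin_Icc.2 (by
          constructor <;> [skip; exact Real.pi_pos.le] <;> simp [le_refl]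
        : (0:ℝ) ∈ Set.Icc 0 Real.pi)
        (⟨by positivity, by linarith [Real.pi_pos]⟩ : Real.sqrt κ * α ∈ Set.Icc 0 Real.pi)
        (by positivity : Real.sqrt κ * α ≠ 0).symm
        (by linarith : (0:ℝ) < 1 - σ) hσ0 (by ring)
      simp only [smul_eq_mul, Real.sin_zero, mul_zero, zero_add] at hconc
      have hkey : σ * Real.sin (Real.sqrt κ * α) < Real.sin (Real.sqrt κ * (σ * α)) := by
        have : Real.sqrt κ * (σ * α) = σ * (Real.sqrt κ * α) := by ring
        rw [this]
        linarith [hconc]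
      have hkey2 : Real.sin (Real.sqrt κ * α) < σ⁻¹ * Real.sin (Real.sqrt κ * (σ * α)) := by
        have h3 := mul_lt_mul_of_pos_left hkey (inv_pos.2 hσ0)
        rwa [← mul_assoc, inv_mul_cancel₀ hσ0.ne', one_mul] at h3
      calc Real.sin (Real.sqrt κ * α) / Real.sqrt κ
          < (σ⁻¹ * Real.sin (Real.sqrt κ * (σ * α))) / Real.sqrt κ := by gcongr
        _ = σ⁻¹ * (Real.sin (Real.sqrt κ * (σ * α)) / Real.sqrt κ) := by ring
    · -- σ > 1
      have hmono : Real.sin (Real.sqrt κ * α) < Real.sin (Real.sqrt κ * (σ * α)) := by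
        have hp1 : (0:ℝ) < Real.sqrt κ * α := by positivity
        have hp2 : (0:ℝ) < Real.sqrt κ * (σ * α) := by positivity
        apply Real.strictMonoOn_sin ⟨by linarith [Real.pi_pos], hsα.le⟩
          ⟨by linarith [Real.pi_pos], hσα⟩
        nlinarith [mul_pos hs hα]
      have h1 : Real.log (Real.sin (Real.sqrt κ * α) / Real.sqrt κ)
          < Real.log (Real.sin (Real.sqrt κ * (σ * α)) / Real.sqrt κ) :=
        Real.log_lt_log (by positivity) (by gcongr)
      have h2 : 0 < Real.log σ := Real.log_pos hgt
      rw [abs_of_pos h2]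
      linarith
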